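/- Under the assumptions of the previous statement (c_r = 0, V ~ Unif[0,1], price decreasing at rate ℓ₋ on (t₁,t₂)), non-negativity of N(t₁) and N(t₂) implies p̲ ≥ 1 − λ_d/λ_r − sqrt(2·n̂·ℓ₋/λ_r) and p̄ ≤ 1 − λ_d/λ_r + sqrt(2·n̂·ℓ₋/λ_r); hence the price range satisfies p̄ − p̲ ≤ sqrt(8·n̂·ℓ₋/λ_r) = O(√ℓ₋). -/
import Mathlib


/-- Proposition D.1: nonnegativity of the endpoint driver counts forces
`p̄ - p̲ ≤ √(8 n̂ ℓ₋ / λ_r)`, i.e. the price range of a cycle is `O(√ℓ₋)`. -/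
theorem stmt_12 (lamd lamr lm pmax pmin nhat N1 N2 : ℝ)
    (hlamr : 0 < lamr) (hlm : 0 < lm) (hnhat : 0 ≤ nhat) (hpp : pmin ≤ pmax)
    (hN1 : N1 = nhat - (lamr / (2 * lm)) * (1 - lamd / lamr - pmax) ^ 2)
    (hN2 : N2 = nhat - (lamr / (2 * lm)) * (1 - lamd / lamr - pmin) ^ 2)
    (hN1pos : 0 ≤ N1) (hN2pos : 0 ≤ N2) :
    pmin ≥ 1 - lamd / lamr - Real.sqrt (2 * nhat * lm / lamr) ∧
      pmax ≤ 1 - lamd / lamr + Real.sqrt (2 * nhat * lm / lamr) ∧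
      pmax - pmin ≤ Real.sqrt (8 * nhat * lm / lamr) := by
  set s := Real.sqrt (2 * nhat * lm / lamr) with hs
  have hQ : (0:ℝ) ≤ 2 * nhat * lm / lamr := by positivity
  have hsq : s ^ 2 = 2 * nhat * lm / lamr := Real.sq_sqrt hQ
  have hsnn : 0 ≤ s := Real.sqrt_nonneg _
  have key : ∀ p : ℝ, (lamr / (2 * lm)) * (1 - lamd / lamr - p) ^ 2 ≤ nhat →
      |1 - lamd / lamr - p| ≤ s := by
    intro p hp
    have h1 : (1 - lamd / lamr - p) ^ 2 ≤ 2 * nhat * lm / lamr := by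
      rw [le_div_iff₀ hlamr]
      have h2lm : 0 < 2 * lm := by positivity
      rw [div_mul_eq_mul_div, div_le_iff₀ h2lm] at hp
      nlinarith
    calc |1 - lamd / lamr - p| = Real.sqrt ((1 - lamd / lamr - p) ^ 2) :=
          (Real.sqrt_sq_eq_abs _).symm
      _ ≤ s := Real.sqrt_le_sqrt h1
  have h1 := key pmax (by linarith)
  have h2 := key pmin (by linarith)
  rw [abs_le] at h1 h2
  refine ⟨by linarith [h2.2], by linarith [h1.1], ?_⟩
  have h8 : Real.sqrt (8 * nhat * lm / lamr) = 2 * s := by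
    have h4 : (8:ℝ) * nhat * lm / lamr = 4 * (2 * nhat * lm / lamr) := by ring
    rw [hs, h4, Real.sqrt_mul (by norm_num),
      show Real.sqrt 4 = 2 from by
        rw [show (4:ℝ) = 2 ^ 2 by norm_num, Real.sqrt_sq (by norm_num)]]
  rw [h8]; linarith [h1.1, h2.2]
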